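/- The derived subgroup of a finite group G is nilpotent if and only if any two commutators of prime power order having coprime orders commute with each other. -/

import Mathlib

open Subgroup MonoidHom MulAction Function
open scoped commutatorElement

section TransferKey

variable {G : Type*} [Group G] {H : Subgroup G} {A : Type*} [CommGroup A] (ϕ : H →* A)

theorem transfer_eq_pow_of_key [H.FiniteIndex] (g : G) (hg : g ∈ H)
    (key : ∀ (k : ℕ) (g₀ : G) (hk : g₀⁻¹ * g ^ k * g₀ ∈ H),
      ϕ ⟨g₀⁻¹ * g ^ k * g₀, hk⟩ = ϕ ⟨g, hg⟩ ^ k) :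
    transfer ϕ g = ϕ ⟨g, hg⟩ ^ H.index := by
  classical
  letI := H.fintypeQuotientOfFiniteIndex
  rw [transfer_eq_prod_quotient_orbitRel_zpowers_quot]
  have hsum : ∑ q : Quotient (orbitRel (zpowers g) (G ⧸ H)),
      Function.minimalPeriod (g • ·) q.out = H.index := by
    simp_rw [minimalPeriod_eq_card]
    rw [index_eq_card, Nat.card_eq_fintype_card,
      Fintype.card_congr (selfEquivSigmaOrbits (zpowers g) (G ⧸ H)), Fintype.card_sigma]
    rfl
  rw [Finset.prod_congr rfl fun q _ => key _ _ _, Finset.prod_pow_eq_pow_sum, hsum]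

end TransferKey

section Focal

variable {G : Type*} [Group G] [Finite G] {p : ℕ} [Fact p.Prime]

/-- Focal subgroup theorem (weak form): the intersection of a Sylow subgroup with the
commutator subgroup is contained in the subgroup generated by commutators lying in the
Sylow subgroup. -/
theorem focal_le_closure (Q : Sylow p G) :
    (Q : Subgroup G) ⊓ commutator G ≤
      Subgroup.closure {c : G | c ∈ Q ∧ ∃ x g : G, c = x⁻¹ * g⁻¹ * x * g} := by
  classical
  set S' : Set ↥(Q : Subgroup G) :=
    {z | ∃ (x : ↥(Q : Subgroup G)) (g : G), (z : G) = (x : G)⁻¹ * g⁻¹ * x * g} with hS'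
  set D : Subgroup ↥(Q : Subgroup G) := Subgroup.closure S' with hD
  have hcomm : commutator ↥(Q : Subgroup G) ≤ D := by
    rw [commutator_def, Subgroup.commutator_le]
    intro a _ b _
    apply Subgroup.subset_closure
    refine ⟨a⁻¹, (b : G)⁻¹, ?_⟩
    simp [commutatorElement_def, mul_assoc]
  haveI hDn : D.Normal := by
    constructor
    intro n hn g
    have h1 : g * n * g⁻¹ = n * ⁅n⁻¹, g⁆ := by group
    rw [h1]
    exact D.mul_mem hn (hcomm (Subgroup.commutator_mem_commutator (mem_top _) (mem_top _)))
  letI : CommGroup (↥(Q : Subgroup G) ⧸ D) :=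
    { (inferInstance : Group (↥(Q : Subgroup G) ⧸ D)) with
      mul_comm := fun x y =>
        Quotient.inductionOn₂' x y fun a b => by
          change ((a * b : ↥(Q : Subgroup G)) : _ ⧸ D) = ((b * a : ↥(Q : Subgroup G)) : _ ⧸ D)
          rw [QuotientGroup.eq]
          have : (a * b)⁻¹ * (b * a) = ⁅b⁻¹, a⁻¹⁆ := by group
          rw [this]
          exact hcomm (Subgroup.commutator_mem_commutator (mem_top _) (mem_top _)) }
  set ϕ : ↥(Q : Subgroup G) →* (↥(Q : Subgroup G) ⧸ D) := QuotientGroup.mk' D with hϕ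
  rintro g ⟨hgQ, hgC⟩
  have key : ∀ (k : ℕ) (g₀ : G) (hk : g₀⁻¹ * g ^ k * g₀ ∈ (Q : Subgroup G)),
      ϕ ⟨g₀⁻¹ * g ^ k * g₀, hk⟩ = ϕ ⟨g, hgQ⟩ ^ k := by
    intro k g₀ hk
    rw [← map_pow]
    have hb : ((⟨g, hgQ⟩ : ↥(Q : Subgroup G)) ^ k : ↥(Q : Subgroup G)) =
        ⟨g ^ k, (Q : Subgroup G).pow_mem hgQ k⟩ := by ext; simp
    rw [hb]
    refine (QuotientGroup.eq ..).mpr ?_ |>.symm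
    apply Subgroup.subset_closure
    refine ⟨⟨g ^ k, (Q : Subgroup G).pow_mem hgQ k⟩, g₀, ?_⟩
    push_cast
    group
  have htr : transfer ϕ g = ϕ ⟨g, hgQ⟩ ^ (Q : Subgroup G).index :=
    transfer_eq_pow_of_key ϕ g hgQ key
  have h1 : transfer ϕ g = 1 := Abelianization.commutator_subset_ker (transfer ϕ) hgC
  have hpow : ϕ ⟨g, hgQ⟩ ^ (Q : Subgroup G).index = 1 := by rw [← htr, h1]
  have hx1 : ϕ ⟨g, hgQ⟩ = 1 := by
    have hPQ : IsPGroup p (↥(Q : Subgroup G) ⧸ D) := Q.isPGroup'.to_quotient D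
    obtain ⟨k, hk⟩ := IsPGroup.iff_orderOf.mp hPQ (ϕ ⟨g, hgQ⟩)
    have hdvd : orderOf (ϕ ⟨g, hgQ⟩) ∣ (Q : Subgroup G).index := orderOf_dvd_of_pow_eq_one hpow
    rw [hk] at hdvd
    have hnd : ¬ p ∣ (Q : Subgroup G).index := Q.not_dvd_index
    have : k = 0 := by
      by_contra hk0
      exact hnd (dvd_trans (dvd_pow_self p hk0) hdvd)
    rw [← orderOf_eq_one_iff, hk, this, pow_zero]
  have hmem : (⟨g, hgQ⟩ : ↥(Q : Subgroup G)) ∈ D := (QuotientGroup.eq_one_iff _).mp hx1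
  have : g ∈ Subgroup.map (Q : Subgroup G).subtype D := ⟨_, hmem, rfl⟩
  rw [hD, MonoidHom.map_closure] at this
  refine Subgroup.closure_mono ?_ this
  rintro c ⟨z, ⟨x, g₀, hz⟩, rfl⟩
  exact ⟨z.2, x, g₀, hz⟩

end Focal

open Subgroup MonoidHom MulAction Function

section Helpers

theorem commute_of_closure {G : Type*} [Group G] {S T : Set G}
    (h : ∀ s ∈ S, ∀ t ∈ T, Commute s t) :
    ∀ x ∈ Subgroup.closure S, ∀ y ∈ Subgroup.closure T, Commute x y := by
  intro x hx y hy
  have h1 : Subgroup.closure T ≤ Subgroup.centralizer S :=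
    (Subgroup.closure_le _).mpr fun t ht =>
      Subgroup.mem_centralizer_iff.mpr fun s hs => h s hs t ht
  have h2 : Subgroup.closure S ≤ Subgroup.centralizer {y} :=
    (Subgroup.closure_le _).mpr fun s hs =>
      Subgroup.mem_centralizer_iff.mpr (by
        rintro z hz
        rw [Set.mem_singleton_iff] at hz
        subst hz
        exact (h1 hy s hs).symm)
  exact ((h2 hx) y rfl).symm

end Helpers

section Gen

variable {G : Type*} [Group G] [Finite G]

theorem sylow_gen {q : ℕ} [Fact q.Prime] (R : Sylow q ↥(commutator G)) :
    ∃ S : Set G, Subgroup.map (commutator G).subtype (R : Subgroup ↥(commutator G))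
        = Subgroup.closure S ∧
      ∀ c ∈ S, (∃ g h : G, c = g⁻¹ * h⁻¹ * g * h) ∧ ∃ k, orderOf c ∣ q ^ k := by
  obtain ⟨Q, hQ⟩ := R.exists_comap_subtype_eq
  refine ⟨{c : G | c ∈ Q ∧ ∃ x g : G, c = x⁻¹ * g⁻¹ * x * g}, ?_, ?_⟩
  · have hmap : Subgroup.map (commutator G).subtype (R : Subgroup ↥(commutator G))
        = commutator G ⊓ (Q : Subgroup G) := by
      rw [← hQ, Subgroup.map_comap_eq, Subgroup.range_subtype]
    rw [hmap]
    apply le_antisymm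
    · intro c hc
      exact focal_le_closure Q ⟨hc.2, hc.1⟩
    · rw [Subgroup.closure_le]
      rintro c ⟨hcQ, x, g, rfl⟩
      refine ⟨?_, hcQ⟩
      have : x⁻¹ * g⁻¹ * x * g = ⁅x⁻¹, g⁻¹⁆ := by
        rw [commutatorElement_def]; group
      rw [this, _root_.commutator_def]
      exact Subgroup.commutator_mem_commutator (mem_top _) (mem_top _)
  · rintro c ⟨hcQ, x, g, hc⟩
    refine ⟨⟨x, g, hc⟩, ?_⟩
    obtain ⟨k, hk⟩ := Q.isPGroup' ⟨c, hcQ⟩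
    refine ⟨k, orderOf_dvd_of_pow_eq_one ?_⟩
    have := congrArg (Subtype.val) hk
    push_cast at this
    exact this

end Gen

theorem normal_of_sylows_le_normalizer {K : Type*} [Group K] [Finite K] {p : ℕ} [Fact p.Prime]
    (R : ∀ q : ℕ, Sylow q K)
    (hle : ∀ q ∈ (Nat.card K).primeFactors,
      (R q : Subgroup K) ≤ Subgroup.normalizer ((R p : Subgroup K) : Set K)) :
    (R p : Subgroup K).Normal := by
  classical
  have htop : (⨆ q ∈ (Nat.card K).primeFactors, (R q : Subgroup K)) = ⊤ := by
    set T := ⨆ q ∈ (Nat.card K).primeFactors, (R q : Subgroup K) with hT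
    have hcard : Nat.card K ∣ Nat.card T := by
      rw [← Nat.factorization_le_iff_dvd Nat.card_pos.ne' Nat.card_pos.ne']
      rw [Finsupp.le_iff]
      intro q hqs
      rw [Nat.support_factorization] at hqs
      haveI : Fact q.Prime := ⟨Nat.prime_of_mem_primeFactors hqs⟩
      have h1 : Nat.card (R q : Subgroup K) = q ^ (Nat.card K).factorization q :=
        Sylow.card_eq_multiplicity (R q)
      have h2 : Nat.card (R q : Subgroup K) ∣ Nat.card T :=
        Subgroup.card_dvd_of_le (le_biSup (f := fun q => (R q : Subgroup K)) hqs)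
      rw [h1] at h2
      exact (Nat.Prime.pow_dvd_iff_le_factorization Fact.out Nat.card_pos.ne').mp h2
    have hTle : Nat.card T ∣ Nat.card K := by
      have h3 := Subgroup.card_dvd_of_le (le_top (a := T))
      rwa [show Nat.card ↥(⊤ : Subgroup K) = Nat.card K from
        Nat.card_congr Subgroup.topEquiv.toEquiv] at h3
    exact Subgroup.eq_top_of_card_eq _ (Nat.dvd_antisymm hTle hcard)
  have hNtop : Subgroup.normalizer ((R p : Subgroup K) : Set K) = ⊤ := by
    apply top_unique
    rw [← htop]
    exact iSup₂_le hle
  exact Subgroup.normalizer_eq_top_iff.mp hNtop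
section Main

variable {G : Type*} [Group G] [Finite G]

theorem sylow_commute
    (hyp : ∀ a b : G, (∃ g h : G, a = g⁻¹ * h⁻¹ * g * h) → (∃ g h : G, b = g⁻¹ * h⁻¹ * g * h) →
      IsPrimePow (orderOf a) → IsPrimePow (orderOf b) →
      Nat.Coprime (orderOf a) (orderOf b) → a * b = b * a)
    {p q : ℕ} [hp : Fact p.Prime] [hq : Fact q.Prime] (hpq : p ≠ q)
    (P : Sylow p ↥(commutator G)) (R : Sylow q ↥(commutator G)) :
    ∀ x ∈ (P : Subgroup ↥(commutator G)), ∀ y ∈ (R : Subgroup ↥(commutator G)), Commute x y := by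
  obtain ⟨S, hS, hSmem⟩ := sylow_gen P
  obtain ⟨T, hT, hTmem⟩ := sylow_gen R
  have hcomm : ∀ s ∈ S, ∀ t ∈ T, Commute s t := by
    intro s hs t ht
    rcases eq_or_ne s 1 with rfl | hs1
    · exact Commute.one_left t
    rcases eq_or_ne t 1 with rfl | ht1
    · exact Commute.one_right s
    obtain ⟨hsc, k, hsk⟩ := hSmem s hs
    obtain ⟨htc, l, htl⟩ := hTmem t ht
    obtain ⟨i, _, his⟩ := (Nat.dvd_prime_pow hp.out).mp hsk
    obtain ⟨j, _, hjt⟩ := (Nat.dvd_prime_pow hq.out).mp htl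
    have hi0 : i ≠ 0 := by
      rintro rfl
      rw [pow_zero] at his
      exact hs1 (orderOf_eq_one_iff.mp his)
    have hj0 : j ≠ 0 := by
      rintro rfl
      rw [pow_zero] at hjt
      exact ht1 (orderOf_eq_one_iff.mp hjt)
    exact hyp s t hsc htc ⟨p, i, hp.out.prime, Nat.pos_of_ne_zero hi0, his.symm⟩
      ⟨q, j, hq.out.prime, Nat.pos_of_ne_zero hj0, hjt.symm⟩
      (by rw [his, hjt]
          exact ((Nat.coprime_primes hp.out hq.out).mpr hpq).pow i j)
  intro x hx y hy
  have hx' : (x : G) ∈ Subgroup.closure S := hS ▸ Subgroup.mem_map_of_mem _ hx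
  have hy' : (y : G) ∈ Subgroup.closure T := hT ▸ Subgroup.mem_map_of_mem _ hy
  have hxy := commute_of_closure hcomm _ hx' _ hy'
  exact Subtype.ext (by push_cast; exact hxy)

set_option maxHeartbeats 1000000 in
theorem sylow_normal_of_hyp
    (hyp : ∀ a b : G, (∃ g h : G, a = g⁻¹ * h⁻¹ * g * h) → (∃ g h : G, b = g⁻¹ * h⁻¹ * g * h) →
      IsPrimePow (orderOf a) → IsPrimePow (orderOf b) →
      Nat.Coprime (orderOf a) (orderOf b) → a * b = b * a)
    (p : ℕ) (hp : Fact p.Prime) (P : Sylow p ↥(commutator G)) :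
    (P : Subgroup ↥(commutator G)).Normal := by
  classical
  -- it suffices to prove it for one Sylow subgroup
  suffices h : ∃ P₀ : Sylow p ↥(commutator G), (P₀ : Subgroup ↥(commutator G)).Normal by
    obtain ⟨P₀, hP₀⟩ := h
    haveI : Subsingleton (Sylow p ↥(commutator G)) :=
      (Sylow.unique_of_normal P₀ hP₀).instSubsingleton
    rwa [Subsingleton.elim P P₀]
  set R : ∀ q : ℕ, Sylow q ↥(commutator G) := fun _ => Classical.arbitrary _ with hR
  refine ⟨R p, normal_of_sylows_le_normalizer R ?_⟩
  intro q hqf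
  haveI hq : Fact q.Prime := ⟨Nat.prime_of_mem_primeFactors hqf⟩
  rcases eq_or_ne q p with rfl | hqp
  · exact Subgroup.le_normalizer
  · intro y hy
    have key : ∀ h ∈ (R p : Subgroup ↥(commutator G)), y * h * y⁻¹ = h := by
      intro h hh
      have hc := sylow_commute hyp hqp.symm (R p) (R q) h hh y hy
      rw [← hc.eq]
      group
    rw [Subgroup.mem_normalizer_iff]
    intro h
    constructor
    · intro hh
      rw [key h hh]
      exact hh
    · intro hh
      have k' := key _ hh
      have h3 : y * h * y⁻¹ = h := mul_left_cancel (mul_right_cancel k')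
      rwa [h3] at hh

end Main

theorem stmt_6 {G : Type*} [Group G] [Finite G] :
    Group.IsNilpotent (commutator G) ↔
    ∀ a b : G, (∃ g h : G, a = g⁻¹ * h⁻¹ * g * h) → (∃ g h : G, b = g⁻¹ * h⁻¹ * g * h) →
      IsPrimePow (orderOf a) → IsPrimePow (orderOf b) →
      Nat.Coprime (orderOf a) (orderOf b) → a * b = b * a := by
  constructor
  · intro hnil a b ha hb hpa hpb hco
    obtain ⟨g1, h1, ha⟩ := ha
    obtain ⟨g2, h2, hb⟩ := hb
    have haH : a ∈ commutator G := by
      rw [ha, show g1⁻¹ * h1⁻¹ * g1 * h1 = ⁅g1⁻¹, h1⁻¹⁆ from by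
        rw [commutatorElement_def]; group, _root_.commutator_def]
      exact Subgroup.commutator_mem_commutator (Subgroup.mem_top _) (Subgroup.mem_top _)
    have hbH : b ∈ commutator G := by
      rw [hb, show g2⁻¹ * h2⁻¹ * g2 * h2 = ⁅g2⁻¹, h2⁻¹⁆ from by
        rw [commutatorElement_def]; group, _root_.commutator_def]
      exact Subgroup.commutator_mem_commutator (Subgroup.mem_top _) (Subgroup.mem_top _)
    set a' : ↥(commutator G) := ⟨a, haH⟩ with ha'
    set b' : ↥(commutator G) := ⟨b, hbH⟩ with hb'
    have hoa : orderOf a = orderOf a' :=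
      orderOf_injective (commutator G).subtype Subtype.coe_injective a'
    have hob : orderOf b = orderOf b' :=
      orderOf_injective (commutator G).subtype Subtype.coe_injective b'
    obtain ⟨p, kp, hpp, hkp, hpe⟩ := hpa
    obtain ⟨q, kq, hqq, hkq, hqe⟩ := hpb
    haveI hpf : Fact p.Prime := ⟨Nat.prime_iff.mpr hpp⟩
    haveI hqf : Fact q.Prime := ⟨Nat.prime_iff.mpr hqq⟩
    have hne : p ≠ q := by
      rintro rfl
      have h1 : p ∣ orderOf a := hpe ▸ dvd_pow_self p hkp.ne'
      have h2 : p ∣ orderOf b := hqe ▸ dvd_pow_self p hkq.ne'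
      have h3 : p ∣ 1 := hco ▸ Nat.dvd_gcd h1 h2
      exact hpf.out.ne_one (Nat.dvd_one.mp h3)
    have hPa : IsPGroup p (Subgroup.zpowers a') := by
      apply IsPGroup.of_card
      rw [Nat.card_zpowers, ← hoa, ← hpe]
    have hPb : IsPGroup q (Subgroup.zpowers b') := by
      apply IsPGroup.of_card
      rw [Nat.card_zpowers, ← hob, ← hqe]
    obtain ⟨P, hP⟩ := hPa.exists_le_sylow
    obtain ⟨Q, hQ⟩ := hPb.exists_le_sylow
    have hnorm := ((isNilpotent_of_finite_tfae (G := ↥(commutator G))).out 0 3).mp hnil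
    haveI hPn : (P : Subgroup ↥(commutator G)).Normal := hnorm p hpf P
    haveI hQn : (Q : Subgroup ↥(commutator G)).Normal := hnorm q hqf Q
    have hdisj := IsPGroup.disjoint_of_ne p q hne _ _ P.isPGroup' Q.isPGroup'
    have hc := Subgroup.commute_of_normal_of_disjoint _ _ hPn hQn hdisj a' b'
      (hP (Subgroup.mem_zpowers a')) (hQ (Subgroup.mem_zpowers b'))
    simpa using congrArg Subtype.val hc
  · intro hyp
    exact ((isNilpotent_of_finite_tfae (G := ↥(commutator G))).out 3 0).mp
      (sylow_normal_of_hyp hyp)
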